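/- Let G be a graph on ν vertices and n a positive integer with ν ≡ n (mod 2) and δ(G) ≥ (ν+n)/2 − 1. Suppose G cannot be expressed as G₀ ∨ (G₁ ∪ G₂) with (ν−n)/2 odd, |V(G₀)| = n, and G₁ = G₂ = K_{(ν−n)/2}. Then G is n-factor-critical if and only if α(G) ≤ (ν−n)/2. -/

import Mathlib

open SimpleGraph

/-- `G` has a perfect matching. -/
def HasPM {W : Type*} (G : SimpleGraph W) : Prop :=
  ∃ M : G.Subgraph, M.IsPerfectMatching

/-- `G` is `k`-extendable: `G` is connected, has a matching of size `k`, and every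
matching of size `k` extends to a perfect matching. -/
def IsKExtendable {W : Type*} (G : SimpleGraph W) (k : ℕ) : Prop :=
  G.Connected ∧
  (∃ M : G.Subgraph, M.IsMatching ∧ M.verts.ncard = 2 * k) ∧
  ∀ M : G.Subgraph, M.IsMatching → M.verts.ncard = 2 * k →
    ∃ P : G.Subgraph, P.IsPerfectMatching ∧ M ≤ P

/-- `G` is `n`-factor-critical: deleting any `n` vertices leaves a graph with a
perfect matching. -/
def IsNFactorCritical {W : Type*} (G : SimpleGraph W) (n : ℕ) : Prop :=
  ∀ S : Finset W, S.card = n → HasPM (G.induce ((↑S : Set W)ᶜ))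

/-- The independence number of `G`. -/
noncomputable def indepNum {W : Type*} (G : SimpleGraph W) : ℕ :=
  sSup {n | ∃ s : Finset W, (∀ u ∈ s, ∀ v ∈ s, ¬ G.Adj u v) ∧ s.card = n}

/-- The number of odd connected components of `G`. -/
noncomputable def numOddComponents {W : Type*} (G : SimpleGraph W) : ℕ :=
  Nat.card {c : G.ConnectedComponent // Odd (Nat.card c.supp)}

/-- `G` is `k½`-extendable: `G` is connected and for every vertex `v`, `G - v` has a
matching of size `k` and every matching of size `k` in `G - v` extends to a perfect
matching of `G - v`. -/
def IsHalfExtendable {W : Type*} (G : SimpleGraph W) (k : ℕ) : Prop :=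
  G.Connected ∧
  ∀ v : W,
    (∃ M : (G.induce ({v} : Set W)ᶜ).Subgraph, M.IsMatching ∧ M.verts.ncard = 2 * k) ∧
    ∀ M : (G.induce ({v} : Set W)ᶜ).Subgraph, M.IsMatching → M.verts.ncard = 2 * k →
      ∃ P : (G.induce ({v} : Set W)ᶜ).Subgraph, P.IsPerfectMatching ∧ M ≤ P

/-- The join of two graphs: all edges between the two vertex classes are added. -/
def graphJoin {α β : Type*} (G : SimpleGraph α) (H : SimpleGraph β) :
    SimpleGraph (α ⊕ β) :=
  SimpleGraph.fromRel (fun a b =>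
    match a, b with
    | Sum.inl u, Sum.inl v => G.Adj u v
    | Sum.inr u, Sum.inr v => H.Adj u v
    | _, _ => True)

/-- The disjoint union of two graphs. -/
def graphUnion {α β : Type*} (G : SimpleGraph α) (H : SimpleGraph β) :
    SimpleGraph (α ⊕ β) :=
  SimpleGraph.fromRel (fun a b =>
    match a, b with
    | Sum.inl u, Sum.inl v => G.Adj u v
    | Sum.inr u, Sum.inr v => H.Adj u v
    | _, _ => False)

/-- The join `G ∨ K₁`: one new vertex joined to every vertex of `G`. -/
def joinK1 {W : Type*} (G : SimpleGraph W) : SimpleGraph (W ⊕ Unit) :=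
  graphJoin G (⊥ : SimpleGraph Unit)

/-- `G` is the join of a graph on `n` vertices with the disjoint union of two cliques
of size `m` (intrinsic formulation of `G = G₀ ∨ (K_m ∪ K_m)`). -/
def IsJoinTwoCliques {W : Type*} [Fintype W] [DecidableEq W] (G : SimpleGraph W) (n m : ℕ) : Prop :=
  ∃ S A B : Finset W,
    Disjoint S A ∧ Disjoint S B ∧ Disjoint A B ∧ S ∪ A ∪ B = Finset.univ ∧
    S.card = n ∧ A.card = m ∧ B.card = m ∧
    (∀ u ∈ A, ∀ v ∈ A, u ≠ v → G.Adj u v) ∧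
    (∀ u ∈ B, ∀ v ∈ B, u ≠ v → G.Adj u v) ∧
    (∀ u ∈ A, ∀ v ∈ B, ¬ G.Adj u v) ∧
    (∀ u ∈ S, ∀ v ∈ A ∪ B, G.Adj u v)

/-- `A` induces in `G` the disjoint union of two factor-critical connected components,
each of size at least `minSize`. -/
def TwoFCComponents {W : Type*} [DecidableEq W] (G : SimpleGraph W) (A : Finset W) (minSize : ℕ) : Prop :=
  ∃ B C : Finset W,
    Disjoint B C ∧ B ∪ C = A ∧ minSize ≤ B.card ∧ minSize ≤ C.card ∧
    (∀ u ∈ B, ∀ v ∈ C, ¬ G.Adj u v) ∧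
    (G.induce (↑B : Set W)).Connected ∧ (G.induce (↑C : Set W)).Connected ∧
    IsNFactorCritical (G.induce (↑B : Set W)) 1 ∧
    IsNFactorCritical (G.induce (↑C : Set W)) 1

set_option linter.unusedSectionVars false

namespace FCaux
variable {V : Type*} [Fintype V] [DecidableEq V] (G : SimpleGraph V) [DecidableRel G.Adj]

def IsM (R s : Finset V) (f : V → V) : Prop :=
  s ⊆ R ∧ ∀ x ∈ s, f x ∈ s ∧ f (f x) = x ∧ G.Adj x (f x)

variable {G}

lemma even_card_of_pairing (f : V → V) (t : Finset V)
    (ht : ∀ x ∈ t, f x ∈ t ∧ f (f x) = x ∧ f x ≠ x) : Even t.card := by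
  induction t using Finset.strongInductionOn with
  | _ t ih =>
    rcases t.eq_empty_or_nonempty with rfl | ⟨x, hx⟩
    · simp
    · obtain ⟨hfx, hffx, hne⟩ := ht x hx
      set t' := (t.erase x).erase (f x) with ht'
      have hsub : t' ⊂ t := by
        refine Finset.ssubset_of_subset_of_ssubset ?_ (Finset.erase_ssubset hx)
        exact Finset.erase_subset _ _
      have hprops : ∀ z ∈ t', f z ∈ t' ∧ f (f z) = z ∧ f z ≠ z := by
        intro z hz
        have hz1 : z ≠ f x := (Finset.mem_erase.mp hz).1
        have hz2 : z ≠ x := (Finset.mem_erase.mp (Finset.mem_erase.mp hz).2).1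
        have hzt : z ∈ t := (Finset.mem_erase.mp (Finset.mem_erase.mp hz).2).2
        obtain ⟨h1, h2, h3⟩ := ht z hzt
        refine ⟨?_, h2, h3⟩
        have hfz1 : f z ≠ f x := fun h => hz2 (by rw [← (ht z hzt).2.1, h, hffx])
        have hfz2 : f z ≠ x := fun h => hz1 (by rw [← h2, h])
        simp [ht', Finset.mem_erase, hfz1, hfz2, h1]
      have hev := ih t' hsub hprops
      have hcard : t'.card = t.card - 2 := by
        rw [ht', Finset.card_erase_of_mem, Finset.card_erase_of_mem hx]
        · omega
        · exact Finset.mem_erase.mpr ⟨hne, hfx⟩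
      have h2le : 2 ≤ t.card := by
        have : ({x, f x} : Finset V) ⊆ t := by
          intro z hz; rcases Finset.mem_insert.mp hz with rfl | hz
          · exact hx
          · simpa using Finset.mem_singleton.mp hz ▸ hfx
        calc 2 = ({x, f x} : Finset V).card := (Finset.card_pair (Ne.symm hne)).symm
          _ ≤ t.card := Finset.card_le_card this
      rw [Nat.even_iff] at hev ⊢
      omega


lemma isM_extend1 {R s : Finset V} {f : V → V} {u v : V} (h : IsM G R s f)
    (hu : u ∈ R) (hv : v ∈ R) (hus : u ∉ s) (hvs : v ∉ s) (hadj : G.Adj u v) :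
    IsM G R (insert u (insert v s))
      (fun z => if z = u then v else if z = v then u else f z) := by
  have huv : u ≠ v := hadj.ne
  constructor
  · intro z hz
    rcases Finset.mem_insert.mp hz with rfl | hz
    · exact hu
    rcases Finset.mem_insert.mp hz with rfl | hz
    · exact hv
    · exact h.1 hz
  · intro z hz
    rcases Finset.mem_insert.mp hz with rfl | hz
    · refine ⟨?_, ?_, ?_⟩ <;> simp [huv, Ne.symm huv, hadj]
    rcases Finset.mem_insert.mp hz with rfl | hz
    · refine ⟨?_, ?_, ?_⟩ <;> simp [huv, Ne.symm huv, hadj.symm]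
    · have hzu : z ≠ u := fun hh => hus (hh ▸ hz)
      have hzv : z ≠ v := fun hh => hvs (hh ▸ hz)
      obtain ⟨h1, h2, h3⟩ := h.2 z hz
      have hfzu : f z ≠ u := fun hh => hus (hh ▸ h1)
      have hfzv : f z ≠ v := fun hh => hvs (hh ▸ h1)
      refine ⟨?_, ?_, ?_⟩ <;> simp [hzu, hzv, hfzu, hfzv, h1, h2, h3]

lemma isM_extend2 {R s : Finset V} {f : V → V} {u v x : V} (h : IsM G R s f)
    (hu : u ∈ R) (hv : v ∈ R) (hus : u ∉ s) (hvs : v ∉ s) (huv : u ≠ v)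
    (hx : x ∈ s) (hux : G.Adj u x) (hvfx : G.Adj v (f x)) :
    IsM G R (insert u (insert v s))
      (fun z => if z = u then x else if z = v then f x else
        if z = x then u else if z = f x then v else f z) := by
  obtain ⟨hfxs, hffx, hxfx⟩ := h.2 x hx
  have hxu : x ≠ u := fun hh => hus (hh ▸ hx)
  have hxv : x ≠ v := fun hh => hvs (hh ▸ hx)
  have hfxu : f x ≠ u := fun hh => hus (hh ▸ hfxs)
  have hfxv : f x ≠ v := fun hh => hvs (hh ▸ hfxs)
  have hxfx' : x ≠ f x := hxfx.ne
  constructor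
  · intro z hz
    rcases Finset.mem_insert.mp hz with rfl | hz
    · exact hu
    rcases Finset.mem_insert.mp hz with rfl | hz
    · exact hv
    · exact h.1 hz
  · intro z hz
    rcases Finset.mem_insert.mp hz with rfl | hz
    · refine ⟨?_, ?_, ?_⟩ <;> simp [hx, hxu, hxv, huv, hux]
    rcases Finset.mem_insert.mp hz with rfl | hz
    · refine ⟨?_, ?_, ?_⟩ <;>
        simp [hfxs, hfxu, hfxv, huv.symm, Ne.symm hxfx', hvfx]
    by_cases hzx : z = x
    · subst hzx
      refine ⟨?_, ?_, ?_⟩ <;> simp [hxu, hxv, hux.symm]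
    by_cases hzfx : z = f x
    · subst hzfx
      refine ⟨?_, ?_, ?_⟩ <;> simp [hfxu, hfxv, Ne.symm hxfx', huv.symm, hvfx.symm]
    · have hzu : z ≠ u := fun hh => hus (hh ▸ hz)
      have hzv : z ≠ v := fun hh => hvs (hh ▸ hz)
      obtain ⟨h1, h2, h3⟩ := h.2 z hz
      have hfzu : f z ≠ u := fun hh => hus (hh ▸ h1)
      have hfzv : f z ≠ v := fun hh => hvs (hh ▸ h1)
      have hfzx : f z ≠ x := fun hh => hzfx (by rw [← h2, hh])
      have hfzfx : f z ≠ f x := fun hh => hzx (by rw [← h2, hh, hffx])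
      refine ⟨?_, ?_, ?_⟩ <;>
        simp [hzu, hzv, hzx, hzfx, hfzu, hfzv, hfzx, hfzfx, h1, h2, h3]

lemma isM_swap {R s : Finset V} {f : V → V} {u x : V} (h : IsM G R s f)
    (hu : u ∈ R) (hus : u ∉ s) (hx : x ∈ s) (hadj : G.Adj u (f x)) :
    IsM G R (insert u (s.erase x))
      (fun z => if z = u then f x else if z = f x then u else f z) := by
  obtain ⟨hfxs, hffx, hxfx⟩ := h.2 x hx
  have hxu : x ≠ u := fun hh => hus (hh ▸ hx)
  have hfxu : f x ≠ u := fun hh => hus (hh ▸ hfxs)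
  have hfxx : f x ≠ x := hxfx.ne'
  constructor
  · intro z hz
    rcases Finset.mem_insert.mp hz with rfl | hz
    · exact hu
    · exact h.1 (Finset.mem_of_mem_erase hz)
  · intro z hz
    rcases Finset.mem_insert.mp hz with rfl | hz
    · refine ⟨?_, ?_, ?_⟩ <;> simp [hfxu, hfxx, hfxs, hadj]
    have hzx : z ≠ x := (Finset.mem_erase.mp hz).1
    have hzs : z ∈ s := (Finset.mem_erase.mp hz).2
    have hzu : z ≠ u := fun hh => hus (hh ▸ hzs)
    by_cases hzfx : z = f x
    · subst hzfx
      refine ⟨?_, ?_, ?_⟩ <;> simp [hfxu, hadj.symm]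
    · obtain ⟨h1, h2, h3⟩ := h.2 z hzs
      have hfzu : f z ≠ u := fun hh => hus (hh ▸ h1)
      have hfzx : f z ≠ x := fun hh => hzfx (by rw [← h2, hh])
      have hfzfx : f z ≠ f x := fun hh => hzx (by rw [← h2, hh, hffx])
      refine ⟨?_, ?_, ?_⟩ <;>
        simp [hzu, hzfx, hfzu, hfzx, hfzfx, h1, h2, h3]

lemma count_lemma {R s : Finset V} {f : V → V} {u v : V} (h : IsM G R s f)
    (hNu : R.filter (G.Adj u) ⊆ s) (hNv : R.filter (G.Adj v) ⊆ s)
    (hcross : ∀ x ∈ s, ¬(G.Adj u x ∧ G.Adj v (f x))) :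
    (R.filter (G.Adj u)).card + (R.filter (G.Adj v)).card ≤ s.card ∧
      ((R.filter (G.Adj u)) ∪ (R.filter (G.Adj v)).image f ⊆ s) ∧
      ((R.filter (G.Adj v)).image f).card = (R.filter (G.Adj v)).card ∧
      Disjoint (R.filter (G.Adj u)) ((R.filter (G.Adj v)).image f) := by
  set Nu := R.filter (G.Adj u) with hNudef
  set Nv := R.filter (G.Adj v) with hNvdef
  have himg : Nv.image f ⊆ s := by
    intro y hy
    obtain ⟨x, hx, rfl⟩ := Finset.mem_image.mp hy
    exact (h.2 x (hNv hx)).1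
  have hinj : Set.InjOn f ↑Nv := by
    intro a ha b hb hab
    have ha' := (h.2 a (hNv ha)).2.1
    have hb' := (h.2 b (hNv hb)).2.1
    rw [← ha', hab, hb']
  have hcard_img : (Nv.image f).card = Nv.card := Finset.card_image_of_injOn hinj
  have hdisj : Disjoint Nu (Nv.image f) := by
    rw [Finset.disjoint_left]
    intro z hzu hzv
    obtain ⟨x, hx, rfl⟩ := Finset.mem_image.mp hzv
    have hxs := hNv hx
    have hffx := (h.2 x hxs).2.1
    have hfxs := (h.2 x hxs).1
    refine hcross (f x) hfxs ⟨(Finset.mem_filter.mp hzu).2, ?_⟩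
    rw [hffx]
    exact (Finset.mem_filter.mp hx).2
  have hsub : Nu ∪ Nv.image f ⊆ s := Finset.union_subset hNu himg
  refine ⟨?_, hsub, hcard_img, hdisj⟩
  calc Nu.card + Nv.card = Nu.card + (Nv.image f).card := by rw [hcard_img]
    _ = (Nu ∪ Nv.image f).card := (Finset.card_union_of_disjoint hdisj).symm
    _ ≤ s.card := Finset.card_le_card hsub

lemma KCpair {k : ℕ} (hk : 1 ≤ k) {R : Finset V} (hR : R.card = 2*k)
    (hdeg : ∀ x ∈ R, k - 1 ≤ (R.filter (G.Adj x)).card)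
    (hno : ¬ ∃ f : V → V, ∀ x ∈ R, f x ∈ R ∧ f (f x) = x ∧ G.Adj x (f x))
    {s : Finset V} {f : V → V} {u v : V} (h : IsM G R s f) (hu : u ∈ R) (hv : v ∈ R)
    (hus : u ∉ s) (hvs : v ∉ s) (huv : u ≠ v)
    (hcomp : ∀ w ∈ R, w ∉ s → w = u ∨ w = v) :
    ¬ G.Adj u v ∧ (R.filter (G.Adj u)).card = k - 1 ∧ (R.filter (G.Adj v)).card = k - 1 ∧
      ∀ x ∈ s, (G.Adj u x ↔ ¬ G.Adj v (f x)) := by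
  have hfull : insert u (insert v s) = R := by
    apply Finset.Subset.antisymm
    · intro z hz
      rcases Finset.mem_insert.mp hz with rfl | hz
      · exact hu
      rcases Finset.mem_insert.mp hz with rfl | hz
      · exact hv
      · exact h.1 hz
    · intro z hz
      by_cases hzs : z ∈ s
      · exact Finset.mem_insert_of_mem (Finset.mem_insert_of_mem hzs)
      · rcases hcomp z hz hzs with rfl | rfl
        · exact Finset.mem_insert_self _ _
        · exact Finset.mem_insert_of_mem (Finset.mem_insert_self _ _)
  have hnadj : ¬ G.Adj u v := by
    intro hadj
    have hext := isM_extend1 h hu hv hus hvs hadj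
    rw [hfull] at hext
    exact hno ⟨_, hext.2⟩
  have hcross : ∀ x ∈ s, ¬(G.Adj u x ∧ G.Adj v (f x)) := by
    rintro x hx ⟨h1, h2⟩
    have hext := isM_extend2 h hu hv hus hvs huv hx h1 h2
    rw [hfull] at hext
    exact hno ⟨_, hext.2⟩
  have hscard : s.card = 2*k - 2 := by
    have : s = R \ {u, v} := by
      ext z
      simp only [Finset.mem_sdiff, Finset.mem_insert, Finset.mem_singleton]
      constructor
      · intro hz
        refine ⟨h.1 hz, ?_⟩
        rintro (rfl | rfl) <;> [exact hus hz; exact hvs hz]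
      · rintro ⟨hzR, hz⟩
        by_contra hzs
        rcases hcomp z hzR hzs with rfl | rfl
        · exact hz (Or.inl rfl)
        · exact hz (Or.inr rfl)
    rw [this, Finset.card_sdiff_of_subset ?_, hR, Finset.card_pair huv]
    intro z hz
    rcases Finset.mem_insert.mp hz with rfl | hz
    · exact hu
    · rw [Finset.mem_singleton.mp hz]; exact hv
  have hNu : R.filter (G.Adj u) ⊆ s := by
    intro y hy
    obtain ⟨hyR, hadj⟩ := Finset.mem_filter.mp hy
    by_contra hys
    rcases hcomp y hyR hys with rfl | rfl
    · exact G.irrefl hadj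
    · exact hnadj hadj
  have hNv : R.filter (G.Adj v) ⊆ s := by
    intro y hy
    obtain ⟨hyR, hadj⟩ := Finset.mem_filter.mp hy
    by_contra hys
    rcases hcomp y hyR hys with rfl | rfl
    · exact hnadj hadj.symm
    · exact G.irrefl hadj
  obtain ⟨hsum, hsub, hcimg, hdisj⟩ := count_lemma h hNu hNv hcross
  have hdu := hdeg u hu
  have hdv := hdeg v hv
  have hdu' : (R.filter (G.Adj u)).card = k - 1 := by omega
  have hdv' : (R.filter (G.Adj v)).card = k - 1 := by omega
  have hueq : (R.filter (G.Adj u)) ∪ (R.filter (G.Adj v)).image f = s := by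
    apply Finset.eq_of_subset_of_card_le hsub
    rw [Finset.card_union_of_disjoint hdisj, hcimg]
    omega
  refine ⟨hnadj, hdu', hdv', ?_⟩
  intro x hx
  constructor
  · intro h1 h2
    exact hcross x hx ⟨h1, h2⟩
  · intro h2
    have hxmem : x ∈ (R.filter (G.Adj u)) ∪ (R.filter (G.Adj v)).image f := by
      rw [hueq]; exact hx
    rcases Finset.mem_union.mp hxmem with hxu | hxv
    · exact (Finset.mem_filter.mp hxu).2
    · obtain ⟨y, hy, rfl⟩ := Finset.mem_image.mp hxv
      have hys := hNv hy
      have : G.Adj v (f (f y)) := by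
        rw [(h.2 y hys).2.1]
        exact (Finset.mem_filter.mp hy).2
      exact absurd this h2

lemma exists_near_perfect {k : ℕ} (hk : 1 ≤ k) {R : Finset V} (hR : R.card = 2*k)
    (hdeg : ∀ x ∈ R, k - 1 ≤ (R.filter (G.Adj x)).card)
    (hind : ∀ t : Finset V, (∀ a ∈ t, ∀ b ∈ t, ¬ G.Adj a b) → t.card ≤ k)
    (hno : ¬ ∃ f : V → V, ∀ x ∈ R, f x ∈ R ∧ f (f x) = x ∧ G.Adj x (f x)) :
    ∃ (s : Finset V) (f : V → V) (u v : V), IsM G R s f ∧ u ∈ R ∧ v ∈ R ∧ u ∉ s ∧ v ∉ s ∧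
      u ≠ v ∧ (∀ w ∈ R, w ∉ s → w = u ∨ w = v) := by
  classical
  set T : Finset (Finset V) := Finset.univ.filter (fun s => ∃ f, IsM G R s f) with hT
  have hne : (∅ : Finset V) ∈ T := by
    refine Finset.mem_filter.mpr ⟨Finset.mem_univ _, id, ?_, ?_⟩
    · exact Finset.empty_subset _
    · intro x hx; exact absurd hx (Finset.notMem_empty x)
  obtain ⟨s, hsT, hmax⟩ := T.exists_max_image Finset.card ⟨∅, hne⟩
  obtain ⟨f, hs⟩ := (Finset.mem_filter.mp hsT).2
  set U := R \ s with hU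
  have hUcompl : ∀ w, w ∈ U ↔ (w ∈ R ∧ w ∉ s) := fun w => Finset.mem_sdiff
  have hUne : U.Nonempty := by
    rcases Finset.eq_empty_or_nonempty U with hUe | hh
    · exfalso
      have : s = R := Finset.Subset.antisymm hs.1 (fun z hz => by
        by_contra hzs
        exact Finset.notMem_empty z (hUe ▸ (hUcompl z).mpr ⟨hz, hzs⟩))
      subst this
      exact hno ⟨f, hs.2⟩
    · exact hh
  have hseven : Even s.card := by
    apply even_card_of_pairing f
    intro x hx
    obtain ⟨h1, h2, h3⟩ := hs.2 x hx
    exact ⟨h1, h2, h3.ne'⟩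
  have hUcard : U.card = 2*k - s.card := by
    rw [hU, Finset.card_sdiff_of_subset hs.1, hR]
  have hU2 : 2 ≤ U.card := by
    rcases hUne with ⟨w, hw⟩
    have h1 : 1 ≤ U.card := Finset.card_pos.mpr ⟨w, hw⟩
    have hsle : s.card ≤ 2*k := by rw [← hR]; exact Finset.card_le_card hs.1
    rw [Nat.even_iff] at hseven
    omega
  obtain ⟨u, hu, v, hv, huv⟩ := Finset.one_lt_card.mp (show 1 < U.card by omega)
  have huR : u ∈ R := ((hUcompl u).mp hu).1
  have hvR : v ∈ R := ((hUcompl v).mp hv).1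
  have hus : u ∉ s := ((hUcompl u).mp hu).2
  have hvs : v ∉ s := ((hUcompl v).mp hv).2
  -- maximality: unmatched vertices are pairwise nonadjacent
  have hindU : ∀ a ∈ U, ∀ b ∈ U, a ≠ b → ¬G.Adj a b := by
    intro a ha b hb hab hadj
    have hext := isM_extend1 hs ((hUcompl a).mp ha).1 ((hUcompl b).mp hb).1
      ((hUcompl a).mp ha).2 ((hUcompl b).mp hb).2 hadj
    have hmem : insert a (insert b s) ∈ T :=
      Finset.mem_filter.mpr ⟨Finset.mem_univ _, _, hext⟩
    have hle := hmax _ hmem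
    rw [Finset.card_insert_of_notMem, Finset.card_insert_of_notMem ((hUcompl b).mp hb).2]
      at hle
    · omega
    · simp only [Finset.mem_insert]
      push_neg
      exact ⟨hab, ((hUcompl a).mp ha).2⟩
  have hcross : ∀ x ∈ s, ¬(G.Adj u x ∧ G.Adj v (f x)) := by
    rintro x hx ⟨h1, h2⟩
    have hext := isM_extend2 hs huR hvR hus hvs huv hx h1 h2
    have hmem : insert u (insert v s) ∈ T :=
      Finset.mem_filter.mpr ⟨Finset.mem_univ _, _, hext⟩
    have hle := hmax _ hmem
    rw [Finset.card_insert_of_notMem, Finset.card_insert_of_notMem hvs] at hle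
    · omega
    · simp only [Finset.mem_insert]
      push_neg
      exact ⟨huv, hus⟩
  have hNu : R.filter (G.Adj u) ⊆ s := by
    intro y hy
    obtain ⟨hyR, hadj⟩ := Finset.mem_filter.mp hy
    by_contra hys
    exact hindU u hu y ((hUcompl y).mpr ⟨hyR, hys⟩) hadj.ne hadj
  have hNv : R.filter (G.Adj v) ⊆ s := by
    intro y hy
    obtain ⟨hyR, hadj⟩ := Finset.mem_filter.mp hy
    by_contra hys
    exact hindU v hv y ((hUcompl y).mpr ⟨hyR, hys⟩) hadj.ne hadj
  obtain ⟨hsum, -, -, -⟩ := count_lemma hs hNu hNv hcross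
  have hdu := hdeg u huR
  have hdv := hdeg v hvR
  have hU2' : U.card = 2 := by omega
  have hUeq : U = {u, v} := by
    symm
    apply Finset.eq_of_subset_of_card_le
    · intro z hz
      rcases Finset.mem_insert.mp hz with rfl | hz
      · exact hu
      · rw [Finset.mem_singleton.mp hz]; exact hv
    · rw [hU2', Finset.card_pair huv]
  refine ⟨s, f, u, v, hs, huR, hvR, hus, hvs, huv, ?_⟩
  intro w hw hws
  have : w ∈ U := (hUcompl w).mpr ⟨hw, hws⟩
  rw [hUeq] at this
  rcases Finset.mem_insert.mp this with rfl | h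
  · exact Or.inl rfl
  · exact Or.inr (Finset.mem_singleton.mp h)

lemma core {k : ℕ} (hk : 1 ≤ k) {R : Finset V} (hR : R.card = 2*k)
    (hdeg : ∀ x ∈ R, k - 1 ≤ (R.filter (G.Adj x)).card)
    (hind : ∀ t : Finset V, (∀ a ∈ t, ∀ b ∈ t, ¬ G.Adj a b) → t.card ≤ k)
    (hno : ¬ ∃ f : V → V, ∀ x ∈ R, f x ∈ R ∧ f (f x) = x ∧ G.Adj x (f x)) :
    Odd k ∧ ∃ A B : Finset V, Disjoint A B ∧ A ∪ B = R ∧ A.card = k ∧ B.card = k ∧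
      (∀ a ∈ A, ∀ b ∈ A, a ≠ b → G.Adj a b) ∧ (∀ a ∈ B, ∀ b ∈ B, a ≠ b → G.Adj a b) ∧
      (∀ a ∈ A, ∀ b ∈ B, ¬ G.Adj a b) := by
  classical
  obtain ⟨s, f, u, v, hs, huR, hvR, hus, hvs, huv, hcomp⟩ :=
    exists_near_perfect hk hR hdeg hind hno
  obtain ⟨hnadj, hdu, hdv, key⟩ := KCpair hk hR hdeg hno hs huR hvR hus hvs huv hcomp
  have hcompvu : ∀ w ∈ R, w ∉ s → w = v ∨ w = u := fun w hw hws => (hcomp w hw hws).symm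
  -- the swap gadget
  have swapkc : ∀ a b : V, a ∈ R → b ∈ R → a ∉ s → b ∉ s → a ≠ b →
      (∀ w ∈ R, w ∉ s → w = a ∨ w = b) → ∀ x ∈ s, G.Adj a (f x) →
      (¬ G.Adj x b) ∧
        ∀ z ∈ s, z ≠ x → z ≠ f x → (G.Adj x z ↔ ¬ G.Adj b (f z)) := by
    intro a b haR hbR has hbs hab hcompab x hx hafx
    have hsw := isM_swap hs haR has hx hafx
    obtain ⟨hfxs, hffx, hxfx⟩ := hs.2 x hx
    have hxR : x ∈ R := hs.1 hx
    have hxa : x ≠ a := fun hh => has (hh ▸ hx)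
    have hxs' : x ∉ insert a (s.erase x) := by
      simp [Finset.mem_insert, Finset.mem_erase, hxa]
    have hxb : x ≠ b := fun hh => hbs (hh ▸ hx)
    have hba : b ≠ a := hab.symm
    have hbs' : b ∉ insert a (s.erase x) := by
      simp only [Finset.mem_insert, Finset.mem_erase]
      push_neg
      exact ⟨hba, fun _ => hbs⟩
    have hcomp' : ∀ w ∈ R, w ∉ insert a (s.erase x) → w = x ∨ w = b := by
      intro w hw hws'
      have hwa : w ≠ a := by
        rintro rfl; exact hws' (Finset.mem_insert_self _ _)
      by_cases hwx : w = x
      · exact Or.inl hwx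
      · have hwsno : w ∉ s := fun hwss =>
          hws' (Finset.mem_insert_of_mem (Finset.mem_erase.mpr ⟨hwx, hwss⟩))
        rcases hcompab w hw hwsno with rfl | rfl
        · exact absurd rfl hwa
        · exact Or.inr rfl
    obtain ⟨hn1, -, -, key'⟩ := KCpair hk hR hdeg hno hsw hxR hbR hxs' hbs' hxb hcomp'
    refine ⟨hn1, ?_⟩
    intro z hz hzx hzfx
    have hzs' : z ∈ insert a (s.erase x) :=
      Finset.mem_insert_of_mem (Finset.mem_erase.mpr ⟨hzx, hz⟩)
    have hza : z ≠ a := fun hh => has (hh ▸ hz)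
    have hkey := key' z hzs'
    simpa [hza, hzfx] using hkey
  -- no vertex of s is adjacent to both u and v
  have noshared : ∀ x ∈ s, ¬(G.Adj u x ∧ G.Adj v x) := by
    rintro x hx ⟨hux, hvx⟩
    obtain ⟨hfxs, hffx, hxfx⟩ := hs.2 x hx
    have hys : f x ∈ s := hfxs
    have hnvy : ¬G.Adj v (f x) := (key x hx).mp hux
    have hnuy : ¬G.Adj u (f x) := by
      intro h
      have hky := key (f x) hys
      rw [hffx] at hky
      exact (hky.mp h) hvx
    have sw1 := swapkc u v huR hvR hus hvs huv hcomp (f x) hys (by rw [hffx]; exact hux)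
    have sw2 := swapkc v u hvR huR hvs hus huv.symm hcompvu (f x) hys
      (by rw [hffx]; exact hvx)
    have hxne_fx : x ≠ f x := hxfx.ne
    have hsame : ∀ w ∈ s, w ≠ x → w ≠ f x → (G.Adj u w ↔ G.Adj v w) := by
      intro w hw hwx hwfx
      obtain ⟨hfws, hffw, _⟩ := hs.2 w hw
      have hfwx : f w ≠ x := fun hh => hwfx (by rw [← hffw, hh])
      have hfwfx : f w ≠ f x := fun hh => hwx (by rw [← hffw, hh, hffx])
      have e1 := sw1.2 (f w) hfws hfwfx (by rw [hffx]; exact hfwx)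
      have e2 := sw2.2 (f w) hfws hfwfx (by rw [hffx]; exact hfwx)
      rw [hffw] at e1 e2
      exact not_iff_not.mp (e2.symm.trans e1)
    -- every matched vertex other than x, f x : adjacent-to-u iff adjacent-to-v,
    -- and each pair has exactly one u-neighbor, so all pairs are "shared":
    -- poor vertices + u + v form an independent set of size k+1.
    set t0 := s.filter (fun z => ¬G.Adj u z) with ht0
    have hxnott0 : x ∉ t0 := by simp [ht0, hux]
    have hfilter_eq : s.filter (fun z => G.Adj u z) = R.filter (G.Adj u) := by
      apply Finset.Subset.antisymm
      · intro y hy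
        obtain ⟨hy1, hy2⟩ := Finset.mem_filter.mp hy
        exact Finset.mem_filter.mpr ⟨hs.1 hy1, hy2⟩
      · intro y hy
        obtain ⟨hy1, hy2⟩ := Finset.mem_filter.mp hy
        refine Finset.mem_filter.mpr ⟨?_, hy2⟩
        by_contra hys
        rcases hcomp y hy1 hys with rfl | rfl
        · exact G.irrefl hy2
        · exact hnadj hy2
    have hscard : s.card = 2*k - 2 := by
      have hseq : s = R \ {u, v} := by
        ext z
        simp only [Finset.mem_sdiff, Finset.mem_insert, Finset.mem_singleton]
        constructor
        · intro hz
          refine ⟨hs.1 hz, ?_⟩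
          rintro (rfl | rfl) <;> [exact hus hz; exact hvs hz]
        · rintro ⟨hzR, hz⟩
          by_contra hzs
          rcases hcomp z hzR hzs with rfl | rfl
          · exact hz (Or.inl rfl)
          · exact hz (Or.inr rfl)
      rw [hseq, Finset.card_sdiff_of_subset ?_, hR, Finset.card_pair huv]
      intro z hz
      rcases Finset.mem_insert.mp hz with rfl | hz
      · exact huR
      · rw [Finset.mem_singleton.mp hz]; exact hvR
    have ht0card : t0.card = k - 1 := by
      have hpart := Finset.card_filter_add_card_filter_not
        (s := s) (p := fun z => G.Adj u z)
      rw [hfilter_eq, hdu] at hpart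
      rw [ht0]
      omega
    -- rich partner of each poor vertex
    have hrichp : ∀ p ∈ t0, G.Adj u (f p) ∧ G.Adj v (f p) := by
      intro p hp
      obtain ⟨hps, hnup⟩ := Finset.mem_filter.mp hp
      obtain ⟨hfps, hffp, hpfp⟩ := hs.2 p hps
      by_cases hpfx : p = f x
      · subst hpfx
        rw [hffx]
        exact ⟨hux, hvx⟩
      · have hpx : p ≠ x := fun hh => hnup (hh ▸ hux)
        have hvfp : G.Adj v (f p) := by
          by_contra hcon
          exact hnup ((key p hps).mpr hcon)
        have hfpx : f p ≠ x := fun hh => hpfx (by rw [← hffp, hh])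
        have hfpfx : f p ≠ f x := fun hh => hpx (by rw [← hffp, hh, hffx])
        have := hsame (f p) hfps hfpx hfpfx
        exact ⟨this.mpr hvfp, hvfp⟩
    -- poor vertices are pairwise nonadjacent
    have hpoorpoor : ∀ p ∈ t0, ∀ q ∈ t0, p ≠ q → ¬G.Adj p q := by
      intro p hp q hq hpq
      obtain ⟨hps, hnup⟩ := Finset.mem_filter.mp hp
      obtain ⟨hqs, hnuq⟩ := Finset.mem_filter.mp hq
      have sw := swapkc u v huR hvR hus hvs huv hcomp p hps (hrichp p hp).1
      have hqfp : q ≠ f p := fun hh => hnuq (hh ▸ (hrichp p hp).1)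
      have hiff := sw.2 q hqs hpq.symm hqfp
      intro hadj
      exact (hiff.mp hadj) (hrichp q hq).2
    -- poor vertices are nonadjacent to v
    have hpoorv : ∀ p ∈ t0, ¬G.Adj v p := by
      intro p hp
      obtain ⟨hps, hnup⟩ := Finset.mem_filter.mp hp
      by_cases hpfx : p = f x
      · subst hpfx; exact hnvy
      · have hpx : p ≠ x := fun hh => hnup (hh ▸ hux)
        intro hcon
        exact hnup ((hsame p hps hpx hpfx).mpr hcon)
    -- independent set of size k+1
    set t := insert u (insert v t0) with ht
    have htcard : t.card = k + 1 := by
      have hv0 : v ∉ t0 := fun hh => hvs (Finset.mem_filter.mp hh).1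
      have hu0 : u ∉ insert v t0 := by
        simp only [Finset.mem_insert]
        push_neg
        exact ⟨huv, fun hh => hus (Finset.mem_filter.mp hh).1⟩
      rw [ht, Finset.card_insert_of_notMem hu0, Finset.card_insert_of_notMem hv0,
        ht0card]
      omega
    have hindep : ∀ a ∈ t, ∀ b ∈ t, ¬G.Adj a b := by
      intro a ha b hb
      rw [ht] at ha hb
      rcases Finset.mem_insert.mp ha with rfl | ha'
      · rcases Finset.mem_insert.mp hb with rfl | hb'
        · exact G.irrefl
        rcases Finset.mem_insert.mp hb' with rfl | hb''
        · exact hnadj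
        · exact (Finset.mem_filter.mp hb'').2
      rcases Finset.mem_insert.mp ha' with rfl | ha''
      · rcases Finset.mem_insert.mp hb with rfl | hb'
        · exact fun h => hnadj h.symm
        rcases Finset.mem_insert.mp hb' with rfl | hb''
        · exact G.irrefl
        · exact hpoorv b hb''
      · rcases Finset.mem_insert.mp hb with rfl | hb'
        · exact fun h => (Finset.mem_filter.mp ha'').2 h.symm
        rcases Finset.mem_insert.mp hb' with rfl | hb''
        · exact fun h => hpoorv a ha'' h.symm
        · by_cases hab : a = b
          · subst hab; exact G.irrefl
          · exact hpoorpoor a ha'' b hb'' hab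
    have := hind t hindep
    omega
  -- rich vertices come in pairs, poor vertices come in pairs
  have richfx : ∀ x ∈ s, G.Adj u x → G.Adj u (f x) := by
    intro x hx hux
    have h1 : ¬G.Adj v x := fun h => noshared x hx ⟨hux, h⟩
    have hffx := (hs.2 x hx).2.1
    have hky := key (f x) (hs.2 x hx).1
    rw [hffx] at hky
    exact hky.mpr h1
  have poorv : ∀ x ∈ s, ¬G.Adj u x → (G.Adj v x ∧ G.Adj v (f x)) := by
    intro x hx hnux
    have h2 : G.Adj v (f x) := by
      by_contra hcon
      exact hnux ((key x hx).mpr hcon)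
    have h3 : ¬G.Adj u (f x) := fun h => noshared (f x) (hs.2 x hx).1 ⟨h, h2⟩
    have hky := key (f x) (hs.2 x hx).1
    rw [(hs.2 x hx).2.1] at hky
    have h4 : G.Adj v x := by
      by_contra hcon
      exact h3 (hky.mpr hcon)
    exact ⟨h4, h2⟩
  have hfilter_eq : s.filter (fun z => G.Adj u z) = R.filter (G.Adj u) := by
    apply Finset.Subset.antisymm
    · intro y hy
      obtain ⟨hy1, hy2⟩ := Finset.mem_filter.mp hy
      exact Finset.mem_filter.mpr ⟨hs.1 hy1, hy2⟩
    · intro y hy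
      obtain ⟨hy1, hy2⟩ := Finset.mem_filter.mp hy
      refine Finset.mem_filter.mpr ⟨?_, hy2⟩
      by_contra hys
      rcases hcomp y hy1 hys with rfl | rfl
      · exact G.irrefl hy2
      · exact hnadj hy2
  have hscard : s.card = 2*k - 2 := by
    have hseq : s = R \ {u, v} := by
      ext z
      simp only [Finset.mem_sdiff, Finset.mem_insert, Finset.mem_singleton]
      constructor
      · intro hz
        refine ⟨hs.1 hz, ?_⟩
        rintro (rfl | rfl) <;> [exact hus hz; exact hvs hz]
      · rintro ⟨hzR, hz⟩
        by_contra hzs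
        rcases hcomp z hzR hzs with rfl | rfl
        · exact hz (Or.inl rfl)
        · exact hz (Or.inr rfl)
    rw [hseq, Finset.card_sdiff_of_subset ?_, hR, Finset.card_pair huv]
    intro z hz
    rcases Finset.mem_insert.mp hz with rfl | hz
    · exact huR
    · rw [Finset.mem_singleton.mp hz]; exact hvR
  have hNucard : (s.filter (fun z => G.Adj u z)).card = k - 1 := by
    rw [hfilter_eq]; exact hdu
  have hNvcard : (s.filter (fun z => ¬G.Adj u z)).card = k - 1 := by
    have hpart := Finset.card_filter_add_card_filter_not
      (s := s) (p := fun z => G.Adj u z)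
    rw [hfilter_eq, hdu] at hpart
    omega
  have hkodd : Odd k := by
    have heven : Even (k - 1) := by
      rw [← hNucard]
      apply even_card_of_pairing f
      intro x hx
      obtain ⟨hxs, hux⟩ := Finset.mem_filter.mp hx
      obtain ⟨h1, h2, h3⟩ := hs.2 x hxs
      exact ⟨Finset.mem_filter.mpr ⟨h1, richfx x hxs hux⟩, h2, h3.ne'⟩
    rw [Nat.even_iff] at heven
    rw [Nat.odd_iff]
    omega
  refine ⟨hkodd, insert u (s.filter (fun z => G.Adj u z)), insert v (s.filter (fun z => ¬G.Adj u z)), ?_, ?_, ?_, ?_, ?_, ?_, ?_⟩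
  · rw [Finset.disjoint_left]
    intro a ha hb
    rcases Finset.mem_insert.mp ha with rfl | ha
    · rcases Finset.mem_insert.mp hb with rfl | hb
      · exact huv rfl
      · exact hus (Finset.mem_filter.mp hb).1
    · rcases Finset.mem_insert.mp hb with rfl | hb
      · exact hvs (Finset.mem_filter.mp ha).1
      · exact (Finset.mem_filter.mp hb).2 (Finset.mem_filter.mp ha).2
  · apply Finset.Subset.antisymm
    · intro z hz
      rcases Finset.mem_union.mp hz with hz | hz
      · rcases Finset.mem_insert.mp hz with rfl | hz
        · exact huR
        · exact hs.1 (Finset.mem_filter.mp hz).1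
      · rcases Finset.mem_insert.mp hz with rfl | hz
        · exact hvR
        · exact hs.1 (Finset.mem_filter.mp hz).1
    · intro z hz
      by_cases hzs : z ∈ s
      · by_cases hadj : G.Adj u z
        · exact Finset.mem_union_left _
            (Finset.mem_insert_of_mem (Finset.mem_filter.mpr ⟨hzs, hadj⟩))
        · exact Finset.mem_union_right _
            (Finset.mem_insert_of_mem (Finset.mem_filter.mpr ⟨hzs, hadj⟩))
      · rcases hcomp z hz hzs with rfl | rfl
        · exact Finset.mem_union_left _ (Finset.mem_insert_self _ _)
        · exact Finset.mem_union_right _ (Finset.mem_insert_self _ _)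
  · rw [Finset.card_insert_of_notMem (fun hh => hus (Finset.mem_filter.mp hh).1),
      hNucard]
    omega
  · rw [Finset.card_insert_of_notMem (fun hh => hvs (Finset.mem_filter.mp hh).1),
      hNvcard]
    omega
  · -- clique on A
    intro a ha b hb hab
    rcases Finset.mem_insert.mp ha with rfl | ha2
    · rcases Finset.mem_insert.mp hb with rfl | hb2
      · exact absurd rfl hab
      · exact (Finset.mem_filter.mp hb2).2
    · rcases Finset.mem_insert.mp hb with rfl | hb2
      · exact (Finset.mem_filter.mp ha2).2.symm
      · obtain ⟨has, hua⟩ := Finset.mem_filter.mp ha2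
        obtain ⟨hbs, hub⟩ := Finset.mem_filter.mp hb2
        by_cases hbfa : b = f a
        · subst hbfa; exact (hs.2 a has).2.2
        · have sw := swapkc u v huR hvR hus hvs huv hcomp a has (richfx a has hua)
          have hiff := sw.2 b hbs hab.symm hbfa
          apply hiff.mpr
          intro hcon
          exact noshared (f b) (hs.2 b hbs).1 ⟨richfx b hbs hub, hcon⟩
  · -- clique on B
    intro a ha b hb hab
    rcases Finset.mem_insert.mp ha with rfl | ha2
    · rcases Finset.mem_insert.mp hb with rfl | hb2
      · exact absurd rfl hab
      · exact (poorv b (Finset.mem_filter.mp hb2).1 (Finset.mem_filter.mp hb2).2).1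
    · rcases Finset.mem_insert.mp hb with rfl | hb2
      · exact (poorv a (Finset.mem_filter.mp ha2).1 (Finset.mem_filter.mp ha2).2).1.symm
      · obtain ⟨has, hnua⟩ := Finset.mem_filter.mp ha2
        obtain ⟨hbs, hnub⟩ := Finset.mem_filter.mp hb2
        by_cases hbfa : b = f a
        · subst hbfa; exact (hs.2 a has).2.2
        · have sw := swapkc v u hvR huR hvs hus huv.symm hcompvu a has
            (poorv a has hnua).2
          have hiff := sw.2 b hbs hab.symm hbfa
          apply hiff.mpr
          intro hcon
          exact noshared (f b) (hs.2 b hbs).1 ⟨hcon, (poorv b hbs hnub).2⟩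
  · -- no edges between A and B
    intro a ha b hb
    rcases Finset.mem_insert.mp ha with rfl | ha2
    · rcases Finset.mem_insert.mp hb with rfl | hb2
      · exact hnadj
      · exact (Finset.mem_filter.mp hb2).2
    · rcases Finset.mem_insert.mp hb with rfl | hb2
      · obtain ⟨has, hua⟩ := Finset.mem_filter.mp ha2
        exact fun h => noshared a has ⟨hua, h.symm⟩
      · obtain ⟨has, hua⟩ := Finset.mem_filter.mp ha2
        obtain ⟨hbs, hnub⟩ := Finset.mem_filter.mp hb2
        have hbfa : b ≠ f a := fun hh => hnub (hh ▸ richfx a has hua)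
        have hab : a ≠ b := fun hh => hnub (hh ▸ hua)
        have sw := swapkc u v huR hvR hus hvs huv hcomp a has (richfx a has hua)
        have hiff := sw.2 b hbs hab.symm hbfa
        intro hadj
        exact (hiff.mp hadj) (poorv b hbs hnub).2

lemma hasPM_of_pairing {S : Finset V} (f : V → V)
    (hf : ∀ x ∈ Sᶜ, f x ∈ Sᶜ ∧ f (f x) = x ∧ G.Adj x (f x)) :
    ∃ M : (G.induce ((↑S : Set V)ᶜ)).Subgraph, M.IsPerfectMatching := by
  have hmem : ∀ x : V, x ∈ ((↑S : Set V)ᶜ) ↔ x ∈ Sᶜ := by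
    intro x
    simp [Set.mem_compl_iff, Finset.mem_compl]
  refine ⟨{ verts := Set.univ,
            Adj := fun a b => f ↑a = ↑b ∧ f ↑b = ↑a ∧ G.Adj ↑a ↑b,
            adj_sub := ?_, edge_vert := ?_, symm := ?_ }, ?_, fun a => Set.mem_univ a⟩
  · rintro a b ⟨-, -, h⟩
    exact h
  · intro a b _
    exact Set.mem_univ a
  · constructor
    rintro a b ⟨h1, h2, h3⟩
    exact ⟨h2, h1, h3.symm⟩
  · rintro a -
    obtain ⟨h1, h2, h3⟩ := hf ↑a ((hmem ↑a).mp a.2)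
    refine ⟨⟨f ↑a, (hmem _).mpr h1⟩, ⟨rfl, ?_, h3⟩, ?_⟩
    · exact h2
    · rintro y ⟨hy1, -, -⟩
      exact Subtype.ext hy1.symm

lemma pairing_of_hasPM {S : Finset V}
    (h : ∃ M : (G.induce ((↑S : Set V)ᶜ)).Subgraph, M.IsPerfectMatching) :
    ∃ f : V → V, ∀ x ∈ Sᶜ, f x ∈ Sᶜ ∧ f (f x) = x ∧ G.Adj x (f x) := by
  classical
  obtain ⟨M, hM⟩ := h
  have hM' := SimpleGraph.Subgraph.isPerfectMatching_iff.mp hM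
  choose g hg hg' using hM'
  have hmem : ∀ x : V, x ∈ ((↑S : Set V)ᶜ) ↔ x ∈ Sᶜ := by
    intro x
    simp [Set.mem_compl_iff, Finset.mem_compl]
  refine ⟨fun x => if hx : x ∈ ((↑S : Set V)ᶜ) then ↑(g ⟨x, hx⟩) else x, ?_⟩
  intro x hx
  have hx' : x ∈ ((↑S : Set V)ᶜ) := (hmem x).mpr hx
  have hgadj := hg ⟨x, hx'⟩
  have hGadj : G.Adj x ↑(g ⟨x, hx'⟩) := by
    have := M.adj_sub hgadj
    simpa using this
  have hgmem : (↑(g ⟨x, hx'⟩) : V) ∈ ((↑S : Set V)ᶜ) := (g ⟨x, hx'⟩).2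
  constructor
  · simp only [dif_pos hx']
    exact (hmem _).mp hgmem
  constructor
  · simp only [dif_pos hx', dif_pos hgmem]
    have hcoe : (⟨↑(g ⟨x, hx'⟩), hgmem⟩ : ((↑S : Set V)ᶜ : Set V)) = g ⟨x, hx'⟩ :=
      Subtype.ext rfl
    rw [hcoe]
    have heq : (⟨x, hx'⟩ : ((↑S : Set V)ᶜ : Set V)) = g (g ⟨x, hx'⟩) :=
      hg' (g ⟨x, hx'⟩) _ (hgadj.symm)
    rw [← heq]
  · simp only [dif_pos hx']
    exact hGadj

end FCaux

open FCaux in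
theorem aux_main {V : Type*} [Fintype V] [DecidableEq V]
    (G : SimpleGraph V) [DecidableRel G.Adj] (n : ℕ)
    (hpos : 0 < n) (hpar : Fintype.card V % 2 = n % 2)
    (hn : n + 2 ≤ Fintype.card V)
    (hdeg : (Fintype.card V + n) / 2 - 1 ≤ G.minDegree)
    (hex : ¬ (Odd ((Fintype.card V - n) / 2) ∧
        (∃ S A B : Finset V,
          Disjoint S A ∧ Disjoint S B ∧ Disjoint A B ∧ S ∪ A ∪ B = Finset.univ ∧
          S.card = n ∧ A.card = (Fintype.card V - n) / 2 ∧ B.card = (Fintype.card V - n) / 2 ∧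
          (∀ u ∈ A, ∀ v ∈ A, u ≠ v → G.Adj u v) ∧
          (∀ u ∈ B, ∀ v ∈ B, u ≠ v → G.Adj u v) ∧
          (∀ u ∈ A, ∀ v ∈ B, ¬ G.Adj u v) ∧
          (∀ u ∈ S, ∀ v ∈ A ∪ B, G.Adj u v)))) :
    (∀ S : Finset V, S.card = n →
        ∃ M : (G.induce ((↑S : Set V)ᶜ)).Subgraph, M.IsPerfectMatching) ↔
      sSup {m | ∃ s : Finset V, (∀ u ∈ s, ∀ v ∈ s, ¬ G.Adj u v) ∧ s.card = m}
        ≤ (Fintype.card V - n) / 2 := by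
  classical
  set ν := Fintype.card V with hν
  set k := (ν - n) / 2 with hkdef
  have hk2 : 2 * k = ν - n := by omega
  have hk1 : 1 ≤ k := by omega
  have hnν : n ≤ ν := by omega
  constructor
  · intro hFC
    apply csSup_le
    · exact ⟨0, ⟨∅, by simp, rfl⟩⟩
    rintro m ⟨t, hti, rfl⟩
    by_cases hcase : n ≤ (tᶜ : Finset V).card
    · obtain ⟨S, hSsub, hScard⟩ := Finset.exists_subset_card_eq hcase
      obtain ⟨F, hF⟩ := pairing_of_hasPM (hFC S hScard)
      have htS : t ⊆ Sᶜ := by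
        intro x hxt
        rw [Finset.mem_compl]
        intro hxS
        have h1 := hSsub hxS
        rw [Finset.mem_compl] at h1
        exact h1 hxt
      have hinj : Set.InjOn F ↑t := by
        intro a ha b hb hab
        have ha' := hF a (htS ha)
        have hb' := hF b (htS hb)
        rw [← ha'.2.1, hab, hb'.2.1]
      have himgdisj : Disjoint t (t.image F) := by
        rw [Finset.disjoint_right]
        intro z hz hzt
        obtain ⟨x, hx, rfl⟩ := Finset.mem_image.mp hz
        exact hti x hx (F x) hzt ((hF x (htS hx)).2.2)
      have himgsub : t.image F ⊆ Sᶜ := by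
        intro z hz
        obtain ⟨x, hx, rfl⟩ := Finset.mem_image.mp hz
        exact (hF x (htS hx)).1
      have hcard : t.card + t.card ≤ (Sᶜ : Finset V).card := by
        have h1 : (t ∪ t.image F).card ≤ (Sᶜ : Finset V).card :=
          Finset.card_le_card (Finset.union_subset htS himgsub)
        rw [Finset.card_union_of_disjoint himgdisj, Finset.card_image_of_injOn hinj] at h1
        exact h1
      rw [Finset.card_compl, hScard] at hcard
      omega
    · push_neg at hcase
      obtain ⟨S, hSsub, -, hScard⟩ := Finset.exists_subsuperset_card_eq
        (tᶜ : Finset V).subset_univ (le_of_lt hcase)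
        (by rw [Finset.card_univ]; omega)
      obtain ⟨F, hF⟩ := pairing_of_hasPM (hFC S hScard)
      have hSc : (Sᶜ : Finset V).card = ν - n := by
        rw [Finset.card_compl, hScard]
      have hSne : (Sᶜ : Finset V).Nonempty := by
        rw [← Finset.card_pos, hSc]; omega
      obtain ⟨x, hx⟩ := hSne
      have hSin : ∀ z, z ∈ (Sᶜ : Finset V) → z ∈ t := by
        intro z hz
        by_contra hzt
        have h1 : z ∈ (tᶜ : Finset V) := Finset.mem_compl.mpr hzt
        have h2 := hSsub h1
        exact (Finset.mem_compl.mp hz) h2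
      have hprop := hF x hx
      exact (hti x (hSin x hx) (F x) (hSin _ hprop.1) hprop.2.2).elim
  · intro hα S hScard
    by_contra hnoPM
    have hno' : ¬ ∃ f : V → V, ∀ x ∈ Sᶜ, f x ∈ Sᶜ ∧ f (f x) = x ∧ G.Adj x (f x) := by
      rintro ⟨f, hf⟩
      exact hnoPM (hasPM_of_pairing f hf)
    have hRcard : (Sᶜ : Finset V).card = 2*k := by
      rw [Finset.card_compl, hScard]; omega
    have hdegR : ∀ x ∈ (Sᶜ : Finset V), k - 1 ≤ ((Sᶜ : Finset V).filter (G.Adj x)).card := by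
      intro x hx
      have hmd : (ν + n)/2 - 1 ≤ G.degree x :=
        le_trans hdeg (G.minDegree_le_degree x)
      have hsplit : G.neighborFinset x ⊆ ((Sᶜ : Finset V).filter (G.Adj x)) ∪ S := by
        intro y hy
        have hadj : G.Adj x y := by rwa [SimpleGraph.mem_neighborFinset] at hy
        by_cases hyS : y ∈ S
        · exact Finset.mem_union_right _ hyS
        · exact Finset.mem_union_left _
            (Finset.mem_filter.mpr ⟨Finset.mem_compl.mpr hyS, hadj⟩)
      have h1 := Finset.card_le_card hsplit
      have h2 := Finset.card_union_le ((Sᶜ : Finset V).filter (G.Adj x)) S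
      have h3 : G.degree x = (G.neighborFinset x).card := rfl
      omega
    have hindR : ∀ t : Finset V, (∀ a ∈ t, ∀ b ∈ t, ¬ G.Adj a b) → t.card ≤ k := by
      intro t hti
      have hbdd : BddAbove {m | ∃ s : Finset V, (∀ u ∈ s, ∀ v ∈ s, ¬ G.Adj u v) ∧ s.card = m} := by
        refine ⟨ν, ?_⟩
        rintro m ⟨s, -, rfl⟩
        calc s.card ≤ (Finset.univ : Finset V).card := Finset.card_le_card s.subset_univ
          _ = ν := Finset.card_univ
      exact le_trans (le_csSup hbdd ⟨t, hti, rfl⟩) hα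
    obtain ⟨hkodd, A, B, hAB, hABR, hAcard, hBcard, hcliqueA, hcliqueB, hcross⟩ :=
      core hk1 hRcard hdegR hindR hno'
    apply hex
    have hASc : A ⊆ (Sᶜ : Finset V) := hABR ▸ Finset.subset_union_left
    have hBSc : B ⊆ (Sᶜ : Finset V) := hABR ▸ Finset.subset_union_right
    have hjoin : ∀ u ∈ S, ∀ w ∈ A ∪ B, G.Adj u w := by
      have hone : ∀ (C D : Finset V), C ∪ D = (Sᶜ : Finset V) → C.card = k →
          (∀ a ∈ C, ∀ b ∈ D, ¬ G.Adj a b) → ∀ u ∈ S, ∀ w ∈ C, G.Adj u w := by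
        intro C D hCD hCcard hCDcross u hu w hw
        have hCSc : C ⊆ (Sᶜ : Finset V) := hCD ▸ Finset.subset_union_left
        have hsub : G.neighborFinset w ⊆ (C.erase w) ∪ S := by
          intro y hy
          have hadj : G.Adj w y := by rwa [SimpleGraph.mem_neighborFinset] at hy
          by_cases hyS : y ∈ S
          · exact Finset.mem_union_right _ hyS
          · have hySc : y ∈ (Sᶜ : Finset V) := Finset.mem_compl.mpr hyS
            rw [← hCD] at hySc
            rcases Finset.mem_union.mp hySc with hyC | hyD
            · exact Finset.mem_union_left _
                (Finset.mem_erase.mpr ⟨hadj.ne', hyC⟩)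
            · exact absurd hadj (hCDcross w hw y hyD)
        have hmd : (ν + n)/2 - 1 ≤ G.degree w :=
          le_trans hdeg (G.minDegree_le_degree w)
        have hle : ((C.erase w) ∪ S).card ≤ (G.neighborFinset w).card := by
          have h1 := Finset.card_union_le (C.erase w) S
          have h2 : (C.erase w).card = k - 1 := by
            rw [Finset.card_erase_of_mem hw, hCcard]
          have h3 : G.degree w = (G.neighborFinset w).card := rfl
          omega
        have heq := Finset.eq_of_subset_of_card_le hsub hle
        have huNw : u ∈ G.neighborFinset w := by
          rw [heq]
          exact Finset.mem_union_right _ hu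
        exact ((SimpleGraph.mem_neighborFinset G w u).mp huNw).symm
      intro u hu w hw
      rcases Finset.mem_union.mp hw with hwA | hwB
      · exact hone A B hABR hAcard hcross u hu w hwA
      · refine hone B A (by rw [Finset.union_comm]; exact hABR) hBcard
          (fun a ha b hb hadj => hcross b hb a ha hadj.symm) u hu w hwB
    refine ⟨hkodd, S, A, B, ?_, ?_, hAB, ?_, hScard, hAcard, hBcard,
      hcliqueA, hcliqueB, hcross, hjoin⟩
    · rw [Finset.disjoint_left]
      intro a haS haA
      exact (Finset.mem_compl.mp (hASc haA)) haS
    · rw [Finset.disjoint_left]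
      intro a haS haB
      exact (Finset.mem_compl.mp (hBSc haB)) haS
    · rw [Finset.union_assoc, hABR]
      exact Finset.union_compl S



/-- With ν ≡ n (mod 2) and δ(G) ≥ (ν+n)/2 − 1, if G is not the exceptional graph
G₀ ∨ (K_{(ν−n)/2} ∪ K_{(ν−n)/2}) with (ν−n)/2 odd, then G is n-factor-critical iff
α(G) ≤ (ν−n)/2. -/
theorem factorCritical_iff_indepNum {V : Type*} [Fintype V] [DecidableEq V]
    (G : SimpleGraph V) [DecidableRel G.Adj] (n : ℕ)
    (hpos : 0 < n) (hpar : Fintype.card V % 2 = n % 2)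
    (hn : n + 2 ≤ Fintype.card V)
    (hdeg : (Fintype.card V + n) / 2 - 1 ≤ G.minDegree)
    (hex : ¬ (Odd ((Fintype.card V - n) / 2) ∧
        IsJoinTwoCliques G n ((Fintype.card V - n) / 2))) :
    IsNFactorCritical G n ↔ _root_.indepNum G ≤ (Fintype.card V - n) / 2 := aux_main G n hpos hpar hn hdeg hex
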